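/- Let f : [a,b] → ℝ be continuous and integrable on [a,b] with 0 ≤ a < b, let l ≥ 1, and suppose |f|^l is quasi-convex on [a,b]. Then for any fixed p, q > 0, ∫_a^b (x-a)^p (b-x)^q f(x) dx ≤ (b-a)^{p+q+1} β(p+1, q+1) (max{|f(a)|^l, |f(b)|^l})^{1/l}. -/

import Mathlib

open Real Set MeasureTheory intervalIntegral

noncomputable def beta (x y : ℝ) : ℝ := ∫ t in (0:ℝ)..1, t ^ (x-1) * (1-t) ^ (y-1)

def QuasiConvexOn' (s : Set ℝ) (g : ℝ → ℝ) : Prop :=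
  ∀ x ∈ s, ∀ y ∈ s, ∀ lam ∈ Set.Icc (0:ℝ) 1, g (lam*x + (1-lam)*y) ≤ max (g x) (g y)

lemma weight_cont (a b p q : ℝ) (hp : 0 < p) (hq : 0 < q) :
    Continuous (fun x : ℝ => (x-a)^p * (b-x)^q) := by
  apply Continuous.mul
  · exact (Real.continuous_rpow_const hp.le).comp (continuous_id.sub continuous_const)
  · exact (Real.continuous_rpow_const hq.le).comp (continuous_const.sub continuous_id)

lemma key_integral (a b p q : ℝ) (hab : a < b) (hp : 0 < p) (hq : 0 < q) :
    ∫ x in a..b, (x-a)^p * (b-x)^q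
      = (b-a)^(p+q+1) * ∫ t in (0:ℝ)..1, t^p * (1-t)^q := by
  have hba : (0:ℝ) < b - a := by linarith
  have h := intervalIntegral.integral_comp_mul_add (a := (0:ℝ)) (b := 1)
    (fun x : ℝ => (x-a)^p * (b-x)^q) (ne_of_gt hba) a
  simp only [mul_zero, zero_add, mul_one] at h
  have hend : b - a + a = b := by ring
  rw [hend] at h
  have hcongr : ∫ t in (0:ℝ)..1, ((b-a)*t + a - a)^p * (b - ((b-a)*t + a))^q
      = ∫ t in (0:ℝ)..1, (b-a)^p * (b-a)^q * (t^p * (1-t)^q) := by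
    apply intervalIntegral.integral_congr
    intro t ht
    rw [Set.uIcc_of_le (by norm_num)] at ht
    have ht0 : 0 ≤ t := ht.1
    have ht1 : 0 ≤ 1 - t := by linarith [ht.2]
    have e1 : (b-a)*t + a - a = (b-a)*t := by ring
    have e2 : b - ((b-a)*t + a) = (b-a)*(1-t) := by ring
    dsimp only
    rw [e1, e2, Real.mul_rpow hba.le ht0, Real.mul_rpow hba.le ht1]
    ring
  rw [hcongr, intervalIntegral.integral_const_mul, smul_eq_mul] at h
  have hI : ∫ x in a..b, (x-a)^p * (b-x)^q
      = (b-a) * ((b-a)^p * (b-a)^q * ∫ t in (0:ℝ)..1, t^p * (1-t)^q) := by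
    rw [h]
    field_simp
  rw [hI, show p + q + 1 = p + (q + 1) by ring, Real.rpow_add hba, Real.rpow_add hba,
    Real.rpow_one]
  ring

theorem stmt15 (a b p q : ℝ) (f : ℝ → ℝ)
    (ha : 0 ≤ a) (hab : a < b) (hp : 0 < p) (hq : 0 < q)
    (hcont : ContinuousOn f (Set.Icc a b))
    (hint : IntervalIntegrable f volume a b)
    (l : ℝ) (hl : 1 ≤ l)
    (hf : QuasiConvexOn' (Set.Icc a b) (fun x => |f x| ^ l)) :
    ∫ x in a..b, (x-a)^p * (b-x)^q * f x
      ≤ (b-a)^(p+q+1) * beta (p+1) (q+1)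
          * (max (|f a| ^ l) (|f b| ^ l)) ^ (1/l) := by
  have hl0 : (0:ℝ) < l := lt_of_lt_of_le one_pos hl
  set M : ℝ := (max (|f a| ^ l) (|f b| ^ l)) ^ (1/l) with hM
  have hmax0 : 0 ≤ max (|f a| ^ l) (|f b| ^ l) :=
    le_max_of_le_left (Real.rpow_nonneg (abs_nonneg _) _)
  have hM0 : 0 ≤ M := Real.rpow_nonneg hmax0 _
  have hba : (0:ℝ) < b - a := by linarith
  -- bound |f x| ≤ M on [a,b]
  have hbound : ∀ x ∈ Set.Icc a b, |f x| ≤ M := by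
    intro x hx
    set lam : ℝ := (b - x) / (b - a) with hlam
    have hlam01 : lam ∈ Set.Icc (0:ℝ) 1 := by
      constructor
      · apply div_nonneg (by linarith [hx.2]) hba.le
      · rw [div_le_one hba]; linarith [hx.1]
    have hxeq : lam * a + (1 - lam) * b = x := by
      rw [hlam]
      field_simp [hlam]
      ring
    have h1 := hf a (Set.left_mem_Icc.mpr hab.le) b (Set.right_mem_Icc.mpr hab.le) lam hlam01
    rw [hxeq] at h1
    have h2 : (|f x| ^ l) ^ (1/l) ≤ M :=
      Real.rpow_le_rpow (Real.rpow_nonneg (abs_nonneg _) _) h1 (by positivity)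
    rwa [← Real.rpow_mul (abs_nonneg _), mul_one_div, div_self (ne_of_gt hl0),
      Real.rpow_one] at h2
  -- weight nonneg on [a,b]
  have hw : Continuous (fun x : ℝ => (x-a)^p * (b-x)^q) := weight_cont a b p q hp hq
  have hint1 : IntervalIntegrable (fun x => (x-a)^p * (b-x)^q * f x) volume a b := by
    exact hint.continuousOn_mul (hw.continuousOn)
  have hint2 : IntervalIntegrable (fun x => (x-a)^p * (b-x)^q * M) volume a b :=
    (hw.mul continuous_const).intervalIntegrable a b
  have hmono : ∫ x in a..b, (x-a)^p * (b-x)^q * f x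
      ≤ ∫ x in a..b, (x-a)^p * (b-x)^q * M := by
    apply intervalIntegral.integral_mono_on hab.le hint1 hint2
    intro x hx
    have hwnn : 0 ≤ (x-a)^p * (b-x)^q := by
      apply mul_nonneg <;> apply Real.rpow_nonneg <;> [linarith [hx.1]; linarith [hx.2]]
    apply mul_le_mul_of_nonneg_left _ hwnn
    calc f x ≤ |f x| := le_abs_self _
      _ ≤ M := hbound x hx
  calc ∫ x in a..b, (x-a)^p * (b-x)^q * f x
      ≤ ∫ x in a..b, (x-a)^p * (b-x)^q * M := hmono
    _ = (∫ x in a..b, (x-a)^p * (b-x)^q) * M := by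
        rw [intervalIntegral.integral_mul_const]
    _ = (b-a)^(p+q+1) * beta (p+1) (q+1) * M := by
        rw [key_integral a b p q hab hp hq, beta]
        norm_num
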